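/- Let c be a partial proper edge-coloring of a graph with colors α ≠ β, and let P be a maximal path in the subgraph of edges colored α or β, with endpoint w incident to at least one edge of P. Then exactly one of α, β is missing at w. -/

import Mathlib

open scoped Classical

/-- The spanning subgraph of edges of `G` colored `α` or `β` by `c`. -/
def twoColored {V : Type*} {N : ℕ} (G : SimpleGraph V) (c : Sym2 V → Option (Fin N))
    (α β : Fin N) : SimpleGraph V where
  Adj u w := G.Adj u w ∧ (c s(u, w) = some α ∨ c s(u, w) = some β)
  symm := ⟨fun u w h => ⟨h.1.symm, by rw [Sym2.eq_swap]; exact h.2⟩⟩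
  loopless := ⟨fun u h => G.irrefl h.1⟩

/-- If w is an endpoint of a maximal αβ-path incident to at least one
of its edges (i.e. w has exactly one incident edge colored α or β), then exactly
one of α, β is missing at w. -/
theorem stmt_6 {V : Type*} {N : ℕ} (G : SimpleGraph V)
    (c : Sym2 V → Option (Fin N))
    (hproper : ∀ u v w : V, G.Adj u v → G.Adj u w → v ≠ w →
      ∀ γ, c s(u, v) = some γ → c s(u, w) ≠ some γ)
    (α β : Fin N) (hαβ : α ≠ β) (w : V)
    (hend : {u | (twoColored G c α β).Adj w u}.ncard = 1) :
    ((∀ u, G.Adj w u → c s(w, u) ≠ some α) ∧ ¬ (∀ u, G.Adj w u → c s(w, u) ≠ some β)) ∨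
    (¬ (∀ u, G.Adj w u → c s(w, u) ≠ some α) ∧ (∀ u, G.Adj w u → c s(w, u) ≠ some β)) := by
  obtain ⟨u, hu⟩ := Set.ncard_eq_one.mp hend
  have hwu : (twoColored G c α β).Adj w u := by
    have : u ∈ ({u} : Set V) := rfl
    rw [← hu] at this; exact this
  have huniq : ∀ v, (twoColored G c α β).Adj w v → v = u := by
    intro v hv
    have : v ∈ ({u} : Set V) := hu ▸ hv
    exact this
  obtain ⟨hG, hc | hc⟩ := hwu
  · right
    constructor
    · intro h; exact h u hG hc
    · intro v hGv hcv
      have : v = u := huniq v ⟨hGv, Or.inr hcv⟩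
      subst this
      rw [hc] at hcv
      exact hαβ (Option.some_injective _ hcv)
  · left
    constructor
    · intro v hGv hcv
      have : v = u := huniq v ⟨hGv, Or.inl hcv⟩
      subst this
      rw [hc] at hcv
      exact hαβ (Option.some_injective _ hcv.symm)
    · intro h; exact h u hG hc
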